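/- Let (Σ, θ) be a Noetherian topological space and ≤* the word embedding (subword) quasi-order on Σ* induced by the specialisation preorder of θ. The function E mapping a topology τ on Σ* to the topology generated by the sets ↑_{≤*}(UV) for U, V ∈ τ and ↑_{≤*}(W) for W ∈ θ (viewing letters as length-1 words) maps Noetherian topologies to Noetherian topologies and is monotone. -/

import Mathlib

/-- A topology is Noetherian when every subset is compact. -/
def Noeth {X : Type*} (t : TopologicalSpace X) : Prop :=
  ∀ s : Set X, @IsCompact X t s

/-- Concatenation of sets of words: `UV = { uv : u ∈ U, v ∈ V }`. -/
def cat {α : Type*} (U V : Set (List α)) : Set (List α) :=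
  {w | ∃ u ∈ U, ∃ v ∈ V, w = u ++ v}

/-- A set of letters viewed as a set of length-1 words. -/
def lift1 {α : Type*} (U : Set α) : Set (List α) :=
  {w | ∃ a ∈ U, w = [a]}

/-- The specialisation preorder of a topology. -/
def specLe {α : Type*} (θ : TopologicalSpace α) (x y : α) : Prop :=
  ∀ U : Set α, θ.IsOpen U → x ∈ U → y ∈ U

/-- The word embedding (subword) quasi-order induced by the specialisation
preorder of `θ`. -/
def wordEmb {α : Type*} (θ : TopologicalSpace α) : List α → List α → Prop :=
  List.SublistForall₂ (specLe θ)

/-- Upward closure with respect to the word embedding quasi-order. -/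
def upEmb {α : Type*} (θ : TopologicalSpace α) (S : Set (List α)) : Set (List α) :=
  {w | ∃ u ∈ S, wordEmb θ u w}

/-- The refinement function for the subword topology: it maps `τ` to the topology
generated by the sets `↑(UV)` for `U, V ∈ τ` and `↑W` for `W ∈ θ`. -/
def Esub {α : Type*} (θ : TopologicalSpace α) (τ : TopologicalSpace (List α)) :
    TopologicalSpace (List α) :=
  TopologicalSpace.generateFrom
    ({W | ∃ U V : Set (List α), τ.IsOpen U ∧ τ.IsOpen V ∧ W = upEmb θ (cat U V)} ∪
     {W' | ∃ W : Set α, θ.IsOpen W ∧ W' = upEmb θ (lift1 W)})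

/-! ### Auxiliary lemmas -/

section Aux

open TopologicalSpace Set

/-- From a filter and an adaptive family of members, build a sequence realizing
all the "step" constraints. -/
lemma chainLemma {X : Type*} (f : Filter X) [hne : f.NeBot] (s : Set X) (hs : s ∈ f)
    (step : X → Set X) (hstep : ∀ x ∈ s, step x ∈ f) :
    ∃ x : ℕ → X, (∀ n, x n ∈ s) ∧ ∀ m n, m < n → x n ∈ step (x m) := by
  classical
  let c : {t : Set X // t ∈ f ∧ t ⊆ s} → X := fun p => (Filter.nonempty_of_mem p.2.1).some
  have hc : ∀ p, c p ∈ p.1 := fun p => (Filter.nonempty_of_mem p.2.1).some_mem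
  let F : {t : Set X // t ∈ f ∧ t ⊆ s} → {t : Set X // t ∈ f ∧ t ⊆ s} := fun p =>
    ⟨p.1 ∩ step (c p), Filter.inter_mem p.2.1 (hstep _ (p.2.2 (hc p))),
      fun y hy => p.2.2 hy.1⟩
  let D : ℕ → {t : Set X // t ∈ f ∧ t ⊆ s} := fun n => F^[n] ⟨s, hs, subset_rfl⟩
  have hDsucc : ∀ n, D (n + 1) = F (D n) := fun n => Function.iterate_succ_apply' F n _
  have hmono : ∀ m n, m ≤ n → (D n).1 ⊆ (D m).1 := by
    intro m n h
    induction h with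
    | refl => exact subset_rfl
    | step h ih =>
      intro x hx
      rw [hDsucc] at hx
      exact ih hx.1
  refine ⟨fun n => c (D n), fun n => (D n).2.2 (hc _), fun m n hmn => ?_⟩
  have h2 : c (D n) ∈ (D (m + 1)).1 := hmono _ _ hmn (hc _)
  rw [hDsucc] at h2
  exact h2.2

/-- Criterion for Noetherianity of a generated topology: it suffices that the
"pointed subbasic opens" are partially well ordered by membership. -/
lemma noeth_generateFrom {X : Type*} {S : Set (Set X)}
    (h : {p : X × Set X | p.2 ∈ S ∧ p.1 ∈ p.2}.PartiallyWellOrderedOn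
      (fun p q => q.1 ∈ p.2)) :
    Noeth (TopologicalSpace.generateFrom S) := by
  classical
  letI : TopologicalSpace X := TopologicalSpace.generateFrom S
  intro s
  rw [isCompact_iff_ultrafilter_le_nhds]
  intro f hf
  by_contra hcon
  push_neg at hcon
  have key : ∀ x ∈ s, ∃ C, C ∈ S ∧ x ∈ C ∧ Cᶜ ∈ f := by
    intro x hx
    have hnx := hcon x hx
    rw [nhds_generateFrom] at hnx
    simp only [le_iInf_iff, Filter.le_principal_iff, Set.mem_setOf_eq] at hnx
    push_neg at hnx
    obtain ⟨C, ⟨hxC, hCS⟩, hCf⟩ := hnx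
    exact ⟨C, hCS, hxC, (f.mem_or_compl_mem C).resolve_left hCf⟩
  choose! C hCS hxC hCc using key
  have hsf : s ∈ f := Filter.le_principal_iff.mp hf
  obtain ⟨x, hxs, hbad⟩ := chainLemma (f : Filter X) s hsf (fun y => (C y)ᶜ)
    (fun y hy => hCc y hy)
  obtain ⟨m, n, hmn, hr⟩ := (Set.partiallyWellOrderedOn_iff_exists_lt.1 h) (fun i => (x i, C (x i)))
    (fun i => ⟨hCS _ (hxs i), hxC _ (hxs i)⟩)
  exact hbad m n hmn hr

/-- In a Noetherian topology, pairs (point, open set containing it) are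
partially well ordered by membership. -/
lemma noeth_pwo {X : Type*} (t : TopologicalSpace X) (ht : Noeth t) :
    {p : X × Set X | t.IsOpen p.2 ∧ p.1 ∈ p.2}.PartiallyWellOrderedOn
      (fun p q => q.1 ∈ p.2) := by
  classical
  rw [Set.partiallyWellOrderedOn_iff_exists_lt]
  intro f hf
  letI := t
  have hc : IsCompact (Set.range fun n => (f n).1) := ht _
  obtain ⟨I, hI⟩ := hc.elim_finite_subcover (fun n => (f n).2) (fun n => (hf n).1)
    (by rintro x ⟨n, rfl⟩; exact Set.mem_iUnion.2 ⟨n, (hf n).2⟩)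
  set n := I.sup id + 1 with hn
  have hmem : (f n).1 ∈ ⋃ i ∈ I, (f i).2 := hI ⟨n, rfl⟩
  simp only [Set.mem_iUnion, exists_prop] at hmem
  obtain ⟨m, hmI, hm⟩ := hmem
  exact ⟨m, n, lt_of_le_of_lt (Finset.le_sup (f := id) hmI) (Nat.lt_succ_self _), hm⟩

/-- Dickson-style lemma for a Noetherian topology. -/
lemma dickson {X : Type*} (t : TopologicalSpace X) (ht : Noeth t)
    (y z : ℕ → X) (A B : ℕ → Set X) (hA : ∀ n, t.IsOpen (A n)) (hB : ∀ n, t.IsOpen (B n))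
    (hy : ∀ n, y n ∈ A n) (hz : ∀ n, z n ∈ B n) :
    ∃ m n, m < n ∧ y n ∈ A m ∧ z n ∈ B m := by
  classical
  by_contra hcon
  push_neg at hcon
  set U := Filter.hyperfilter ℕ with hU
  have hgt : ∀ m : ℕ, {n : ℕ | m < n} ∈ U := by
    intro m
    apply Filter.mem_hyperfilter_of_finite_compl
    have : {n : ℕ | m < n}ᶜ = {n : ℕ | n ≤ m} := by
      ext k; simp [Nat.not_lt]
    rw [this]
    exact Set.finite_le_nat m
  set P := {m : ℕ | {n : ℕ | y n ∈ A m} ∈ U} with hP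
  rcases U.mem_or_compl_mem P with hPU | hPU
  · have hstep0 : ∀ m ∈ P, {n : ℕ | z n ∉ B m} ∩ {n : ℕ | m < n} ∈ U := by
      intro m hm
      have h1 : {n : ℕ | y n ∈ A m} ∩ {n : ℕ | m < n} ∈ U := Filter.inter_mem hm (hgt m)
      refine Filter.inter_mem (Filter.mem_of_superset h1 ?_) (hgt m)
      rintro j ⟨hj1, hj2⟩
      exact hcon m j hj2 hj1
    obtain ⟨k, hks, hstep⟩ := chainLemma (U : Filter ℕ) P hPU
      (fun m => {n : ℕ | z n ∉ B m} ∩ {n : ℕ | m < n}) hstep0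
    obtain ⟨m, n, hmn, hr⟩ := (Set.partiallyWellOrderedOn_iff_exists_lt.1 (noeth_pwo t ht)) (fun i => (z (k i), B (k i)))
      (fun i => ⟨hB _, hz _⟩)
    exact (hstep m n hmn).1 hr
  · have hstep0 : ∀ m ∈ Pᶜ, {n : ℕ | y n ∉ A m} ∩ {n : ℕ | m < n} ∈ U := by
      intro m hm
      have h1 : {n : ℕ | y n ∈ A m} ∉ U := hm
      have h2 : {n : ℕ | y n ∈ A m}ᶜ ∈ U := (U.mem_or_compl_mem _).resolve_left h1
      refine Filter.inter_mem (Filter.mem_of_superset h2 ?_) (hgt m)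
      intro j hj
      exact hj
    obtain ⟨k, hks, hstep⟩ := chainLemma (U : Filter ℕ) Pᶜ hPU
      (fun m => {n : ℕ | y n ∉ A m} ∩ {n : ℕ | m < n}) hstep0
    obtain ⟨m, n, hmn, hr⟩ := (Set.partiallyWellOrderedOn_iff_exists_lt.1 (noeth_pwo t ht)) (fun i => (y (k i), A (k i)))
      (fun i => ⟨hA _, hy _⟩)
    exact (hstep m n hmn).1 hr

lemma specle_refl {α : Type*} (θ : TopologicalSpace α) (a : α) : specLe θ a a :=
  fun _ _ h => h

lemma wordEmb_single {α : Type*} (θ : TopologicalSpace α) {a : α} {l : List α}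
    (h : a ∈ l) : wordEmb θ [a] l :=
  List.sublistForall₂_iff.2 ⟨[a], List.Forall₂.cons (specle_refl θ a) List.Forall₂.nil,
    List.singleton_sublist.2 h⟩

lemma wordEmb_single_elim {α : Type*} (θ : TopologicalSpace α) {a : α} {l : List α}
    (h : wordEmb θ [a] l) : ∃ b ∈ l, specLe θ a b := by
  obtain ⟨l', F, sub⟩ := List.sublistForall₂_iff.1 h
  cases F with
  | cons hab F' =>
    cases F'
    exact ⟨_, List.singleton_sublist.1 sub, hab⟩

lemma wordEmb_append {α : Type*} (θ : TopologicalSpace α) {u v y z : List α}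
    (h1 : wordEmb θ u y) (h2 : wordEmb θ v z) : wordEmb θ (u ++ v) (y ++ z) := by
  obtain ⟨l1, F1, s1⟩ := List.sublistForall₂_iff.1 h1
  obtain ⟨l2, F2, s2⟩ := List.sublistForall₂_iff.1 h2
  exact List.sublistForall₂_iff.2 ⟨l1 ++ l2, List.rel_append F1 F2, s1.append s2⟩

lemma forall2_append_split {α β : Type*} {R : α → β → Prop} {u v : List α} {l : List β}
    (h : List.Forall₂ R (u ++ v) l) :
    ∃ l1 l2, l = l1 ++ l2 ∧ List.Forall₂ R u l1 ∧ List.Forall₂ R v l2 := by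
  induction u generalizing l with
  | nil => exact ⟨[], l, rfl, List.Forall₂.nil, h⟩
  | cons a u ih =>
    cases h with
    | cons hab F' =>
      obtain ⟨l1, l2, rfl, h1, h2⟩ := ih F'
      exact ⟨_ :: l1, l2, rfl, List.Forall₂.cons hab h1, h2⟩

lemma wordEmb_split {α : Type*} (θ : TopologicalSpace α) {u v x : List α}
    (h : wordEmb θ (u ++ v) x) :
    ∃ y z, x = y ++ z ∧ wordEmb θ u y ∧ wordEmb θ v z := by
  obtain ⟨l, F, sub⟩ := List.sublistForall₂_iff.1 h
  obtain ⟨l1, l2, rfl, F1, F2⟩ := forall2_append_split F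
  obtain ⟨x1, x2, rfl, s1, s2⟩ := List.append_sublist_iff.1 sub
  exact ⟨x1, x2, rfl, List.sublistForall₂_iff.2 ⟨l1, F1, s1⟩,
    List.sublistForall₂_iff.2 ⟨l2, F2, s2⟩⟩

/-- The topology generated by the upward closures of the opens of a Noetherian
topology is Noetherian. -/
lemma noeth_up {α : Type*} (θ : TopologicalSpace α) (τ : TopologicalSpace (List α))
    (hτ : Noeth τ) :
    Noeth (TopologicalSpace.generateFrom
      {W | ∃ U, τ.IsOpen U ∧ W = upEmb θ U}) := by
  apply noeth_generateFrom
  rw [Set.partiallyWellOrderedOn_iff_exists_lt]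
  intro f hf
  choose Us hUopen hUeq using fun n => (hf n).1
  have hx : ∀ n, (f n).1 ∈ upEmb θ (Us n) := fun n => (hUeq n) ▸ (hf n).2
  choose u hu hemb using hx
  obtain ⟨m, n, hmn, hr⟩ := (Set.partiallyWellOrderedOn_iff_exists_lt.1 (noeth_pwo τ hτ)) (fun i => (u i, Us i))
    (fun i => ⟨hUopen i, hu i⟩)
  refine ⟨m, n, hmn, ?_⟩
  show (f n).1 ∈ (f m).2
  rw [hUeq m]
  exact ⟨u n, hr, hemb n⟩

lemma noeth_Esub {α : Type*} (θ : TopologicalSpace α) (hθ : Noeth θ)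
    (τ : TopologicalSpace (List α)) (hτ : Noeth τ) : Noeth (Esub θ τ) := by
  classical
  apply noeth_generateFrom
  set SP := {W : Set (List α) |
    ∃ U V : Set (List α), τ.IsOpen U ∧ τ.IsOpen V ∧ W = upEmb θ (cat U V)} with hSP
  set SQ := {W' : Set (List α) | ∃ W : Set α, θ.IsOpen W ∧ W' = upEmb θ (lift1 W)} with hSQ
  have hP : {p : List α × Set (List α) | p.2 ∈ SP ∧ p.1 ∈ p.2}.PartiallyWellOrderedOn
      (fun p q => q.1 ∈ p.2) := by
    rw [Set.partiallyWellOrderedOn_iff_exists_lt]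
    intro f hf
    choose Us Vs hU hV heq using fun n => (hf n).1
    have hx : ∀ n, ∃ y z, (f n).1 = y ++ z ∧ y ∈ upEmb θ (Us n) ∧ z ∈ upEmb θ (Vs n) := by
      intro n
      have h2 : (f n).1 ∈ upEmb θ (cat (Us n) (Vs n)) := (heq n) ▸ (hf n).2
      obtain ⟨w, ⟨uu, huu, vv, hvv, rfl⟩, hembw⟩ := h2
      obtain ⟨yy, zz, hyz, e1, e2⟩ := wordEmb_split θ hembw
      exact ⟨yy, zz, hyz, ⟨uu, huu, e1⟩, ⟨vv, hvv, e2⟩⟩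
    choose y z hyz hyU hzV using hx
    set t1 := TopologicalSpace.generateFrom
      {W : Set (List α) | ∃ U, τ.IsOpen U ∧ W = upEmb θ U} with ht1
    have hopen : ∀ (W : Set (List α)), τ.IsOpen W → t1.IsOpen (upEmb θ W) := fun W hW =>
      TopologicalSpace.isOpen_generateFrom_of_mem ⟨W, hW, rfl⟩
    obtain ⟨m, n, hmn, hym, hzm⟩ := dickson t1 (noeth_up θ τ hτ) y z
      (fun i => upEmb θ (Us i)) (fun i => upEmb θ (Vs i))
      (fun i => hopen _ (hU i)) (fun i => hopen _ (hV i)) hyU hzV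
    refine ⟨m, n, hmn, ?_⟩
    show (f n).1 ∈ (f m).2
    rw [heq m, hyz n]
    obtain ⟨u', hu', he1⟩ := hym
    obtain ⟨v', hv', he2⟩ := hzm
    exact ⟨u' ++ v', ⟨u', hu', v', hv', rfl⟩, wordEmb_append θ he1 he2⟩
  have hQ : {p : List α × Set (List α) | p.2 ∈ SQ ∧ p.1 ∈ p.2}.PartiallyWellOrderedOn
      (fun p q => q.1 ∈ p.2) := by
    rw [Set.partiallyWellOrderedOn_iff_exists_lt]
    intro f hf
    choose W hWopen hWeq using fun n => (hf n).1
    have hb : ∀ n, ∃ b, b ∈ (f n).1 ∧ b ∈ W n := by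
      intro n
      have hx : (f n).1 ∈ upEmb θ (lift1 (W n)) := (hWeq n) ▸ (hf n).2
      obtain ⟨w, ⟨a, haW, rfl⟩, hembw⟩ := hx
      obtain ⟨b, hbl, hab⟩ := wordEmb_single_elim θ hembw
      exact ⟨b, hbl, hab (W n) (hWopen n) haW⟩
    choose b hbl hbW using hb
    obtain ⟨m, n, hmn, hr⟩ := (Set.partiallyWellOrderedOn_iff_exists_lt.1 (noeth_pwo θ hθ)) (fun i => (b i, W i))
      (fun i => ⟨hWopen i, hbW i⟩)
    refine ⟨m, n, hmn, ?_⟩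
    show (f n).1 ∈ (f m).2
    rw [hWeq m]
    exact ⟨[b n], ⟨b n, hr, rfl⟩, wordEmb_single θ (hbl n)⟩
  refine (hP.union hQ).mono ?_
  rintro p ⟨hp | hp, hm⟩
  · exact Or.inl ⟨hp, hm⟩
  · exact Or.inr ⟨hp, hm⟩

end Aux

theorem stmt14 {α : Type*} (θ : TopologicalSpace α) (hθ : Noeth θ) :
    (∀ τ τ' : TopologicalSpace (List α),
      (∀ U, τ.IsOpen U → τ'.IsOpen U) →
        ∀ U, (Esub θ τ).IsOpen U → (Esub θ τ').IsOpen U) ∧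
    (∀ τ : TopologicalSpace (List α), Noeth τ → Noeth (Esub θ τ)) := by
  constructor
  · intro τ τ' h U hU
    have hU' : TopologicalSpace.GenerateOpen
        ({W | ∃ U V : Set (List α), τ.IsOpen U ∧ τ.IsOpen V ∧ W = upEmb θ (cat U V)} ∪
         {W' | ∃ W : Set α, θ.IsOpen W ∧ W' = upEmb θ (lift1 W)}) U := hU
    clear hU
    show TopologicalSpace.GenerateOpen _ U
    induction hU' with
    | basic V hV =>
      apply TopologicalSpace.GenerateOpen.basic
      rcases hV with ⟨U1, V1, h1, h2, rfl⟩ | ⟨W, h1, rfl⟩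
      · exact Or.inl ⟨U1, V1, h _ h1, h _ h2, rfl⟩
      · exact Or.inr ⟨W, h1, rfl⟩
    | univ => exact TopologicalSpace.GenerateOpen.univ
    | inter _ _ _ _ ih1 ih2 => exact TopologicalSpace.GenerateOpen.inter _ _ ih1 ih2
    | sUnion _ _ ih => exact TopologicalSpace.GenerateOpen.sUnion _ ih
  · intro τ hτ
    exact noeth_Esub θ hθ τ hτ
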